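/- (Fundamental Morphism Theorem in Grphs) Let f : A → B be a morphism in the category Grphs of multigraphs with graph morphisms. Let q : A → I be a coequalizer of the kernel pair of f (the two projections R_f ⇉ A from the pullback of f along itself), and let q* : I* → B be an equalizer of the cokernel pair of f (the two coprojections B ⇉ R_f* from the pushout of f along itself). Then the unique morphism h : I → I* satisfying q* ∘ h ∘ q = f is an isomorphism. -/

import Mathlib

/-- A multigraph: a vertex type, an edge type, and an incidence function
assigning to each edge an unordered pair of vertices. -/
structure Multigraph : Type 1 where
  V : Type
  E : Type
  ψ : E → Sym2 V

namespace Multigraph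

/-- The part set of a multigraph: vertices together with edges. -/
abbrev Part (G : Multigraph) : Type := G.V ⊕ G.E

/-- The incidence function extended to parts: a vertex `v` is incident to `{v,v}`. -/
def incid (G : Multigraph) : G.Part → Sym2 G.V
  | Sum.inl v => s(v, v)
  | Sum.inr e => G.ψ e

/-- A graph morphism: a function on part sets mapping vertices to vertices and
preserving incidence.  (The vertex map is recorded separately, but it is uniquely
determined by the part map.) -/
@[ext]
structure Hom (G H : Multigraph) where
  partMap : G.Part → H.Part
  vertMap : G.V → H.V
  partMap_vert : ∀ v : G.V, partMap (Sum.inl v) = Sum.inl (vertMap v)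
  incid_partMap : ∀ p : G.Part, H.incid (partMap p) = (G.incid p).map vertMap

/-- The identity graph morphism. -/
def Hom.id (G : Multigraph) : Hom G G where
  partMap := _root_.id
  vertMap := _root_.id
  partMap_vert := fun _ => rfl
  incid_partMap := fun p => by simp

/-- Composition of graph morphisms. -/
def Hom.comp {G H K : Multigraph} (g : Hom H K) (f : Hom G H) : Hom G K where
  partMap := g.partMap ∘ f.partMap
  vertMap := g.vertMap ∘ f.vertMap
  partMap_vert := fun v => by simp [f.partMap_vert, g.partMap_vert]
  incid_partMap := fun p => by
    simp [Function.comp, g.incid_partMap, f.incid_partMap, Sym2.map_map]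

/-- A strict graph morphism: a graph morphism that moreover maps edges to edges. -/
@[ext]
structure StrictHom (G H : Multigraph) extends Hom G H where
  edgeMap : G.E → H.E
  partMap_edge : ∀ e : G.E, partMap (Sum.inr e) = Sum.inr (edgeMap e)

/-- The identity strict graph morphism. -/
def StrictHom.id (G : Multigraph) : StrictHom G G where
  toHom := Hom.id G
  edgeMap := _root_.id
  partMap_edge := fun _ => rfl

/-- Composition of strict graph morphisms. -/
def StrictHom.comp {G H K : Multigraph} (g : StrictHom H K) (f : StrictHom G H) :
    StrictHom G K where
  toHom := g.toHom.comp f.toHom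
  edgeMap := g.edgeMap ∘ f.edgeMap
  partMap_edge := fun e => by
    simp [Hom.comp, f.partMap_edge, g.partMap_edge]

/-! ### Auxiliary material for the proof -/

theorem Hom.ext_part {G H : Multigraph} {f g : Hom G H} (hp : f.partMap = g.partMap) :
    f = g := by
  have hv : f.vertMap = g.vertMap := funext fun v => by
    have h := congrFun hp (Sum.inl v)
    rw [f.partMap_vert, g.partMap_vert] at h
    exact Sum.inl.inj h
  cases f; cases g; cases hp; cases hv; rfl

theorem Hom.comp_assoc {G H K L : Multigraph} (h : Hom K L) (g : Hom H K) (f : Hom G H) :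
    (h.comp g).comp f = h.comp (g.comp f) := Hom.ext_part rfl

theorem Hom.id_comp {G H : Multigraph} (f : Hom G H) : (Hom.id H).comp f = f :=
  Hom.ext_part rfl

theorem sym2_exists_rep {α : Type*} (σ : Sym2 α) : ∃ x y, σ = s(x, y) :=
  Sym2.ind (fun x y => ⟨x, y, rfl⟩) σ

/-- If a part maps to a vertex, that vertex is the image of a vertex. -/
theorem Hom.exists_vert_of_partMap_inl {G H : Multigraph} (m : Hom G H) (p : G.Part) (v : H.V)
    (hp : m.partMap p = Sum.inl v) : ∃ x : G.V, m.vertMap x = v := by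
  have hi := m.incid_partMap p
  rw [hp] at hi
  obtain ⟨x, y, hxy⟩ := sym2_exists_rep (G.incid p)
  rw [hxy, Sym2.map_pair_eq] at hi
  have hi' : s(v, v) = s(m.vertMap x, m.vertMap y) := hi
  rcases Sym2.eq_iff.mp hi' with ⟨h1, _⟩ | ⟨_, h1⟩ <;> exact ⟨x, h1.symm⟩

/-- The one-vertex multigraph. -/
def Vg : Multigraph := ⟨Unit, Empty, fun e => e.elim⟩

/-- The morphism from `Vg` picking out a vertex. -/
def vHom (G : Multigraph) (v : G.V) : Hom Vg G where
  partMap := fun _ => Sum.inl v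
  vertMap := fun _ => v
  partMap_vert := fun _ => rfl
  incid_partMap := fun p => by
    cases p with
    | inl u => simp [incid]
    | inr e => exact e.elim

/-- The one-edge multigraph with two distinct endpoints. -/
def Kg : Multigraph := ⟨Bool, Unit, fun _ => s(false, true)⟩

/-- The morphism from `Kg` picking out a part together with an orientation of its
endpoints. -/
def kHom (G : Multigraph) (x y : G.V) (p : G.Part) (hp : G.incid p = s(x, y)) : Hom Kg G where
  partMap := fun pp => match pp with
    | Sum.inl b => Sum.inl (cond b y x)
    | Sum.inr _ => p
  vertMap := fun b => cond b y x
  partMap_vert := fun _ => rfl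
  incid_partMap := fun pp => by
    cases pp with
    | inl b => simp [incid, Kg]; rfl
    | inr u =>
      show G.incid p = (Kg.incid (Sum.inr u)).map fun b => cond b y x
      have : (Kg.incid (Sum.inr u)).map (fun b => cond b y x) = s(x, y) := by
        show (s(false, true)).map (fun b => cond b y x) = s(x, y)
        rw [Sym2.map_pair_eq]
        rfl
      rw [this, hp]

section Image

variable (A I : Multigraph) (q : Hom A I)

/-- The image of `q` as a multigraph. -/
noncomputable abbrev ImG : Multigraph where
  V := {v : I.V // ∃ a, q.vertMap a = v}
  E := {e : I.E // ∃ a, q.partMap (Sum.inr a) = Sum.inr e}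
  ψ := fun e => (A.incid (Sum.inr e.2.choose)).map
    (fun a => (⟨q.vertMap a, a, rfl⟩ : {v : I.V // ∃ a, q.vertMap a = v}))

theorem imInc_incid (e : (ImG A I q).E) :
    ((ImG A I q).ψ e).map Subtype.val = I.incid (Sum.inr e.1) := by
  have hs := e.2.choose_spec
  show ((A.incid (Sum.inr e.2.choose)).map _).map Subtype.val = _
  rw [Sym2.map_map]
  have h1 : (A.incid (Sum.inr e.2.choose)).map
      (Subtype.val ∘ fun a => (⟨q.vertMap a, a, rfl⟩ : {v : I.V // ∃ a, q.vertMap a = v}))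
      = (A.incid (Sum.inr e.2.choose)).map q.vertMap := rfl
  rw [h1, ← q.incid_partMap, hs]

/-- Inclusion of the image into the codomain. -/
noncomputable def imInc : Hom (ImG A I q) I where
  partMap := Sum.map Subtype.val Subtype.val
  vertMap := Subtype.val
  partMap_vert := fun _ => rfl
  incid_partMap := fun p => by
    cases p with
    | inl v => rfl
    | inr e =>
      show I.incid (Sum.inr e.1) = ((ImG A I q).ψ e).map Subtype.val
      exact (imInc_incid A I q e).symm

theorem imInc_part_inj :
    Function.Injective (Sum.map Subtype.val Subtype.val : (ImG A I q).Part → I.Part) := by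
  rintro (⟨v, hv⟩ | ⟨e, he⟩) (⟨v', hv'⟩ | ⟨e', he'⟩) hh <;>
    simp only [Sum.map_inl, Sum.map_inr] at hh <;> cases hh <;> rfl

theorem exists_emem (p : A.Part) (e : I.E) (hp : q.partMap p = Sum.inr e) :
    ∃ a, q.partMap (Sum.inr a) = Sum.inr e := by
  cases p with
  | inl a => rw [q.partMap_vert] at hp; cases hp
  | inr a => exact ⟨a, hp⟩

/-- The corestriction of `q` to its image: the part map. -/
noncomputable def imResPart (p : A.Part) : (ImG A I q).Part :=
  match hp : q.partMap p with
  | Sum.inl v => Sum.inl ⟨v, q.exists_vert_of_partMap_inl p v hp⟩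
  | Sum.inr e => Sum.inr ⟨e, exists_emem A I q p e hp⟩

theorem imResPart_val (p : A.Part) :
    Sum.map Subtype.val Subtype.val (imResPart A I q p) = q.partMap p := by
  unfold imResPart
  split <;> simp_all

/-- The corestriction of `q` to its image. -/
noncomputable def imRes : Hom A (ImG A I q) where
  partMap := imResPart A I q
  vertMap := fun a => ⟨q.vertMap a, a, rfl⟩
  partMap_vert := fun v => imInc_part_inj A I q (by
    rw [imResPart_val, q.partMap_vert]; rfl)
  incid_partMap := fun p => by
    apply Sym2.map.injective (Subtype.val_injective)
    have h1 : ((ImG A I q).incid (imResPart A I q p)).map Subtype.val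
        = I.incid (Sum.map Subtype.val Subtype.val (imResPart A I q p)) :=
      ((imInc A I q).incid_partMap (imResPart A I q p)).symm
    rw [h1, imResPart_val, q.incid_partMap, Sym2.map_map]
    rfl

theorem imInc_comp_imRes : (imInc A I q).comp (imRes A I q) = q :=
  Hom.ext_part (funext fun p => imResPart_val A I q p)

end Image

section Push

variable (A B : Multigraph) (f : Hom A B)

open Classical in
/-- Vertex map of the second coprojection into the concrete pushout-like graph. -/
noncomputable def pj1v (v : B.V) : B.V ⊕ {v : B.V // ¬ ∃ a, f.vertMap a = v} :=
  if h : ∃ a, f.vertMap a = v then Sum.inl v else Sum.inr ⟨v, h⟩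

/-- A concrete graph receiving two maps from `B` that agree exactly on the image of `f`. -/
noncomputable def PX : Multigraph where
  V := B.V ⊕ {v : B.V // ¬ ∃ a, f.vertMap a = v}
  E := B.E ⊕ {e : B.E // ¬ ∃ a, f.partMap (Sum.inr a) = Sum.inr e}
  ψ := Sum.elim (fun e => (B.ψ e).map Sum.inl) (fun e => (B.ψ e.1).map (pj1v A B f))

/-- First coprojection. -/
noncomputable def pj0 : Hom B (PX A B f) where
  partMap := Sum.map Sum.inl Sum.inl
  vertMap := Sum.inl
  partMap_vert := fun _ => rfl
  incid_partMap := fun p => by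
    cases p with
    | inl v => rfl
    | inr e => rfl

theorem pj1v_of_mem (v : B.V) (h : ∃ a, f.vertMap a = v) : pj1v A B f v = Sum.inl v := by
  unfold pj1v; rw [dif_pos h]

open Classical in
/-- Part map of the second coprojection. -/
noncomputable def pj1part (p : B.Part) : (PX A B f).Part :=
  match p with
  | Sum.inl v => Sum.inl (pj1v A B f v)
  | Sum.inr e =>
    if h : ∃ a, f.partMap (Sum.inr a) = Sum.inr e then Sum.inr (Sum.inl e)
    else Sum.inr (Sum.inr ⟨e, h⟩)

open Classical in
theorem pj1part_inr_pos (e : B.E) (h : ∃ a, f.partMap (Sum.inr a) = Sum.inr e) :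
    pj1part A B f (Sum.inr e) = Sum.inr (Sum.inl e) := by
  show ((if h : ∃ a, f.partMap (Sum.inr a) = Sum.inr e then Sum.inr (Sum.inl e)
    else Sum.inr (Sum.inr ⟨e, h⟩) : (PX A B f).Part)) = Sum.inr (Sum.inl e)
  rw [dif_pos h]
  rfl

open Classical in
theorem pj1part_inr_neg (e : B.E) (h : ¬ ∃ a, f.partMap (Sum.inr a) = Sum.inr e) :
    pj1part A B f (Sum.inr e) = Sum.inr (Sum.inr ⟨e, h⟩) := by
  show ((if h : ∃ a, f.partMap (Sum.inr a) = Sum.inr e then Sum.inr (Sum.inl e)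
    else Sum.inr (Sum.inr ⟨e, h⟩) : (PX A B f).Part)) = Sum.inr (Sum.inr ⟨e, h⟩)
  rw [dif_neg h]
  rfl

theorem image_edge_endpoints (e : B.E) (h : ∃ a, f.partMap (Sum.inr a) = Sum.inr e) :
    (B.ψ e).map Sum.inl = (B.ψ e).map (pj1v A B f) := by
  obtain ⟨a, ha⟩ := h
  have hi := f.incid_partMap (Sum.inr a)
  rw [ha] at hi
  obtain ⟨x, y, hxy⟩ := sym2_exists_rep (A.incid (Sum.inr a))
  rw [hxy, Sym2.map_pair_eq] at hi
  have hi' : B.ψ e = s(f.vertMap x, f.vertMap y) := hi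
  rw [hi', Sym2.map_pair_eq, Sym2.map_pair_eq,
    pj1v_of_mem A B f _ ⟨x, rfl⟩, pj1v_of_mem A B f _ ⟨y, rfl⟩]

/-- Second coprojection. -/
noncomputable def pj1 : Hom B (PX A B f) where
  partMap := pj1part A B f
  vertMap := pj1v A B f
  partMap_vert := fun _ => rfl
  incid_partMap := fun p => by
    cases p with
    | inl v => rfl
    | inr e =>
      show (PX A B f).incid (pj1part A B f (Sum.inr e)) = (B.ψ e).map (pj1v A B f)
      by_cases h : ∃ a, f.partMap (Sum.inr a) = Sum.inr e
      · rw [pj1part_inr_pos A B f e h]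
        exact image_edge_endpoints A B f e h
      · rw [pj1part_inr_neg A B f e h]
        rfl

theorem pj_comp_eq : (pj0 A B f).comp f = (pj1 A B f).comp f := by
  apply Hom.ext_part
  funext p
  show (pj0 A B f).partMap (f.partMap p) = (pj1 A B f).partMap (f.partMap p)
  cases p with
  | inl a =>
    rw [f.partMap_vert]
    show Sum.inl (Sum.inl (f.vertMap a)) = Sum.inl (pj1v A B f (f.vertMap a))
    rw [pj1v_of_mem A B f _ ⟨a, rfl⟩]
  | inr a =>
    rcases hfa : f.partMap (Sum.inr a) with v | e
    · obtain ⟨x, hx⟩ := f.exists_vert_of_partMap_inl (Sum.inr a) v hfa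
      show Sum.inl (Sum.inl v) = Sum.inl (pj1v A B f v)
      rw [pj1v_of_mem A B f v ⟨x, hx⟩]
    · show Sum.inr (Sum.inl e) = pj1part A B f (Sum.inr e)
      rw [pj1part_inr_pos A B f e ⟨a, hfa⟩]

theorem pj_agree (b : B.Part) (hb : (pj0 A B f).partMap b = (pj1 A B f).partMap b) :
    ∃ pa, f.partMap pa = b := by
  cases b with
  | inl v =>
    by_cases h : ∃ a, f.vertMap a = v
    · obtain ⟨a, ha⟩ := h
      exact ⟨Sum.inl a, by rw [f.partMap_vert, ha]⟩
    · exfalso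
      have hb' : Sum.inl (Sum.inl v) = (Sum.inl (pj1v A B f v) :
          (PX A B f).V ⊕ (PX A B f).E) := hb
      unfold pj1v at hb'
      rw [dif_neg h] at hb'
      cases Sum.inl.inj hb'
  | inr e =>
    by_cases h : ∃ a, f.partMap (Sum.inr a) = Sum.inr e
    · obtain ⟨a, ha⟩ := h
      exact ⟨Sum.inr a, ha⟩
    · exfalso
      have hb' : Sum.inr (Sum.inl e) = pj1part A B f (Sum.inr e) := hb
      rw [pj1part_inr_neg A B f e h] at hb'
      cases Sum.inr.inj hb'

end Push

end Multigraph

open Multigraph in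
/-- **The Fundamental Morphism Theorem in Grphs.** Given a morphism `f : A → B`,
a kernel pair `p0, p1 : R → A` of `f` (a pullback of `f` along itself),
a coequalizer `q : A → I` of the kernel pair, a cokernel pair `i0, i1 : B → C`
of `f` (a pushout of `f` along itself), and an equalizer `q* : I* → B` of the
cokernel pair, the unique morphism `h : I → I*` with `q* ∘ h ∘ q = f` is an
isomorphism. -/
theorem fundamentalMorphismTheorem_grphs
    (A B : Multigraph) (f : Hom A B)
    -- the kernel pair of f : a pullback of f along itself
    (R : Multigraph) (p0 p1 : Hom R A)
    (hker : f.comp p0 = f.comp p1)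
    (hkerUniv : ∀ (X : Multigraph) (a b : Hom X A), f.comp a = f.comp b →
      ∃! t : Hom X R, p0.comp t = a ∧ p1.comp t = b)
    -- q : A → I, a coequalizer of the kernel pair
    (I : Multigraph) (q : Hom A I)
    (hq : q.comp p0 = q.comp p1)
    (hqUniv : ∀ (X : Multigraph) (m : Hom A X), m.comp p0 = m.comp p1 →
      ∃! t : Hom I X, t.comp q = m)
    -- the cokernel pair of f : a pushout of f along itself
    (C : Multigraph) (i0 i1 : Hom B C)
    (hcoker : i0.comp f = i1.comp f)
    (hcokerUniv : ∀ (X : Multigraph) (j0 j1 : Hom B X), j0.comp f = j1.comp f →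
      ∃! t : Hom C X, t.comp i0 = j0 ∧ t.comp i1 = j1)
    -- q* : I* → B, an equalizer of the cokernel pair
    (Istar : Multigraph) (qstar : Hom Istar B)
    (hqs : i0.comp qstar = i1.comp qstar)
    (hqsUniv : ∀ (X : Multigraph) (m : Hom X B), i0.comp m = i1.comp m →
      ∃! t : Hom X Istar, qstar.comp t = m)
    -- the unique comparison morphism h with q* ∘ h ∘ q = f
    (h : Hom I Istar)
    (hcomm : qstar.comp (h.comp q) = f) :
    ∃ hinv : Hom Istar I, hinv.comp h = Hom.id I ∧ h.comp hinv = Hom.id Istar := by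
  classical
  -- Step 1: q is surjective on parts.
  have hcoeq : (imRes A I q).comp p0 = (imRes A I q).comp p1 := by
    apply Hom.ext_part
    funext p
    apply imInc_part_inj A I q
    show Sum.map _ _ (imResPart A I q (p0.partMap p)) = Sum.map _ _ (imResPart A I q (p1.partMap p))
    rw [imResPart_val, imResPart_val]
    exact congrFun (congrArg Hom.partMap hq) p
  obtain ⟨t, ht, -⟩ := hqUniv (ImG A I q) (imRes A I q) hcoeq
  obtain ⟨u, -, huniq⟩ := hqUniv I q hq
  have hassoc : ((imInc A I q).comp t).comp q = q := by
    rw [Hom.comp_assoc, ht, imInc_comp_imRes]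
  have h1 : (imInc A I q).comp t = Hom.id I :=
    (huniq _ hassoc).trans (huniq _ (Hom.id_comp q)).symm
  have hqsurj : ∀ p : I.Part, ∃ pa, q.partMap pa = p := by
    intro p
    have hp : (imInc A I q).partMap (t.partMap p) = p := congrFun (congrArg Hom.partMap h1) p
    rcases htp : t.partMap p with ⟨v, a, ha⟩ | ⟨e, a, ha⟩
    · refine ⟨Sum.inl a, ?_⟩
      rw [htp] at hp
      have hp' : Sum.inl v = p := hp
      rw [q.partMap_vert, ha]
      exact hp'
    · refine ⟨Sum.inr a, ?_⟩
      rw [htp] at hp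
      have hp' : Sum.inr e = p := hp
      exact ha.trans hp'
  -- Step 2: parts of A with the same image under f have the same image under q.
  have hfq : ∀ pa pa' : A.Part, f.partMap pa = f.partMap pa' →
      q.partMap pa = q.partMap pa' := by
    intro pa pa' hff
    obtain ⟨x, y, hxy⟩ := sym2_exists_rep (A.incid pa)
    obtain ⟨x', y', hxy'⟩ := sym2_exists_rep (A.incid pa')
    have key : ∀ (a b : A.V), A.incid pa' = s(a, b) →
        f.vertMap x = f.vertMap a → f.vertMap y = f.vertMap b →
        q.partMap pa = q.partMap pa' := by
      intro a b hab h1' h2'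
      have hm : f.comp (kHom A x y pa hxy) = f.comp (kHom A a b pa' hab) := by
        apply Hom.ext_part
        funext pp
        rcases pp with c | w
        · show f.partMap (Sum.inl (cond c y x)) = f.partMap (Sum.inl (cond c b a))
          rw [f.partMap_vert, f.partMap_vert]
          cases c
          · exact congrArg Sum.inl h1'
          · exact congrArg Sum.inl h2'
        · exact hff
      obtain ⟨t2, ⟨ht0, ht1⟩, -⟩ := hkerUniv Kg (kHom A x y pa hxy) (kHom A a b pa' hab) hm
      have c0 : p0.partMap (t2.partMap (Sum.inr ())) = pa :=
        congrFun (congrArg Hom.partMap ht0) (Sum.inr ())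
      have c1 : p1.partMap (t2.partMap (Sum.inr ())) = pa' :=
        congrFun (congrArg Hom.partMap ht1) (Sum.inr ())
      have cm : q.partMap (p0.partMap (t2.partMap (Sum.inr ())))
          = q.partMap (p1.partMap (t2.partMap (Sum.inr ()))) :=
        congrFun (congrArg Hom.partMap hq) (t2.partMap (Sum.inr ()))
      rw [← c0, ← c1]
      exact cm
    have hi : s(f.vertMap x, f.vertMap y) = s(f.vertMap x', f.vertMap y') := by
      have e1 : B.incid (f.partMap pa) = s(f.vertMap x, f.vertMap y) := by
        rw [f.incid_partMap, hxy, Sym2.map_pair_eq]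
      have e2 : B.incid (f.partMap pa') = s(f.vertMap x', f.vertMap y') := by
        rw [f.incid_partMap, hxy', Sym2.map_pair_eq]
      rw [← e1, ← e2, hff]
    rcases Sym2.eq_iff.mp hi with ⟨h1', h2'⟩ | ⟨h1', h2'⟩
    · exact key x' y' hxy' h1' h2'
    · exact key y' x' (by rw [hxy', Sym2.eq_swap]) h1' h2'
  -- Step 3: qstar is a monomorphism, hence injective on vertices and parts.
  have hmono : ∀ (X : Multigraph) (u' v' : Hom X Istar),
      qstar.comp u' = qstar.comp v' → u' = v' := by
    intro X u' v' huv
    have he : i0.comp (qstar.comp u') = i1.comp (qstar.comp u') := by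
      rw [← Hom.comp_assoc, ← Hom.comp_assoc, hqs]
    obtain ⟨w, -, hwu⟩ := hqsUniv X (qstar.comp u') he
    rw [hwu u' rfl, hwu v' huv.symm]
  have hqsv_inj : Function.Injective qstar.vertMap := by
    intro v v' hv
    have heq := hmono Vg (vHom Istar v) (vHom Istar v') (by
      apply Hom.ext_part
      funext pp
      rcases pp with w | e
      · show qstar.partMap (Sum.inl v) = qstar.partMap (Sum.inl v')
        rw [qstar.partMap_vert, qstar.partMap_vert, hv]
      · exact e.elim)
    exact congrFun (congrArg Hom.vertMap heq) ()
  have hqsp_inj : Function.Injective qstar.partMap := by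
    intro p p' hp
    obtain ⟨x, y, hxy⟩ := sym2_exists_rep (Istar.incid p)
    obtain ⟨x', y', hxy'⟩ := sym2_exists_rep (Istar.incid p')
    have key : ∀ (a b : Istar.V), Istar.incid p' = s(a, b) → x = a → y = b → p = p' := by
      intro a b hab h1' h2'
      subst h1'; subst h2'
      have heq := hmono Kg (kHom Istar x y p hxy) (kHom Istar x y p' hab) (by
        apply Hom.ext_part
        funext pp
        rcases pp with c | w
        · rfl
        · exact hp)
      exact congrFun (congrArg Hom.partMap heq) (Sum.inr ())
    have hi : s(qstar.vertMap x, qstar.vertMap y)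
        = s(qstar.vertMap x', qstar.vertMap y') := by
      have e1 : B.incid (qstar.partMap p) = s(qstar.vertMap x, qstar.vertMap y) := by
        rw [qstar.incid_partMap, hxy, Sym2.map_pair_eq]
      have e2 : B.incid (qstar.partMap p') = s(qstar.vertMap x', qstar.vertMap y') := by
        rw [qstar.incid_partMap, hxy', Sym2.map_pair_eq]
      rw [← e1, ← e2, hp]
    rcases Sym2.eq_iff.mp hi with ⟨h1', h2'⟩ | ⟨h1', h2'⟩
    · exact key x' y' hxy' (hqsv_inj h1') (hqsv_inj h2')
    · exact key y' x' (by rw [hxy', Sym2.eq_swap]) (hqsv_inj h1') (hqsv_inj h2')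
  -- Step 4: the image of qstar is contained in the image of f.
  obtain ⟨t3, ⟨ht30, ht31⟩, -⟩ := hcokerUniv (PX A B f) (pj0 A B f) (pj1 A B f)
    (pj_comp_eq A B f)
  have hqs_im : ∀ ps : Istar.Part, ∃ pa, f.partMap pa = qstar.partMap ps := by
    intro ps
    apply pj_agree A B f
    have hii : i0.partMap (qstar.partMap ps) = i1.partMap (qstar.partMap ps) :=
      congrFun (congrArg Hom.partMap hqs) ps
    have e0 : (pj0 A B f).partMap (qstar.partMap ps)
        = t3.partMap (i0.partMap (qstar.partMap ps)) :=
      (congrFun (congrArg Hom.partMap ht30) (qstar.partMap ps)).symm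
    have e1 : (pj1 A B f).partMap (qstar.partMap ps)
        = t3.partMap (i1.partMap (qstar.partMap ps)) :=
      (congrFun (congrArg Hom.partMap ht31) (qstar.partMap ps)).symm
    rw [e0, e1, hii]
  -- Step 5: hcomm pointwise.
  have hcp : ∀ pa : A.Part, qstar.partMap (h.partMap (q.partMap pa)) = f.partMap pa :=
    fun pa => congrFun (congrArg Hom.partMap hcomm) pa
  -- Step 6: h is bijective on parts and vertices.
  have hhp_surj : Function.Surjective h.partMap := by
    intro ps
    obtain ⟨pa, hpa⟩ := hqs_im ps
    exact ⟨q.partMap pa, hqsp_inj (by rw [hcp pa, hpa])⟩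
  have hhp_inj : Function.Injective h.partMap := by
    intro p p' hpp
    obtain ⟨pa, hpa⟩ := hqsurj p
    obtain ⟨pa', hpa'⟩ := hqsurj p'
    have hfe : f.partMap pa = f.partMap pa' := by
      have : qstar.partMap (h.partMap (q.partMap pa))
          = qstar.partMap (h.partMap (q.partMap pa')) := by rw [hpa, hpa', hpp]
      rw [hcp, hcp] at this
      exact this
    rw [← hpa, ← hpa']
    exact hfq pa pa' hfe
  have hhv_inj : Function.Injective h.vertMap := by
    intro v v' hv
    have : h.partMap (Sum.inl v) = h.partMap (Sum.inl v') := by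
      rw [h.partMap_vert, h.partMap_vert, hv]
    exact Sum.inl.inj (hhp_inj this)
  have hhv_surj : Function.Surjective h.vertMap := by
    intro vs
    obtain ⟨p, hp⟩ := hhp_surj (Sum.inl vs)
    exact h.exists_vert_of_partMap_inl p vs hp
  -- Step 7: build the inverse.
  let eP : I.Part ≃ Istar.Part := Equiv.ofBijective h.partMap ⟨hhp_inj, hhp_surj⟩
  let eV : I.V ≃ Istar.V := Equiv.ofBijective h.vertMap ⟨hhv_inj, hhv_surj⟩
  refine ⟨⟨eP.symm, eV.symm, ?_, ?_⟩, ?_, ?_⟩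
  · intro vs
    apply eP.injective
    show h.partMap (eP.symm (Sum.inl vs)) = h.partMap (Sum.inl (eV.symm vs))
    have h2' : h.partMap (eP.symm (Sum.inl vs)) = Sum.inl vs := eP.apply_symm_apply _
    have h3' : h.vertMap (eV.symm vs) = vs := eV.apply_symm_apply _
    rw [h2', h.partMap_vert, h3']
  · intro ps
    apply Sym2.map.injective hhv_inj
    have h1' : (I.incid (eP.symm ps)).map h.vertMap
        = Istar.incid (h.partMap (eP.symm ps)) := (h.incid_partMap _).symm
    have h2' : h.partMap (eP.symm ps) = ps := eP.apply_symm_apply ps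
    rw [h1', h2', Sym2.map_map]
    have h3' : h.vertMap ∘ (eV.symm : Istar.V → I.V) = _root_.id :=
      funext fun vs => eV.apply_symm_apply vs
    rw [h3', Sym2.map_id, id_eq]
  · apply Hom.ext_part
    funext p
    show eP.symm (h.partMap p) = p
    exact eP.symm_apply_apply p
  · apply Hom.ext_part
    funext p
    show h.partMap (eP.symm p) = p
    exact eP.apply_symm_apply p
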